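/- Let (C, [,], ∘) be a post-Lie algebra over a field k of characteristic 0 and let λ ∈ k with λ ≠ 0. Then there exist a Lie algebra L over k, a Rota–Baxter operator P : L → L of weight λ (i.e., [P(x),P(y)] = P([P(x),y] + [x,P(y)] + λ[x,y]) for all x, y ∈ L), and an injective linear map ι : C → L such that ι(x ∘ y) = [P(ι(x)), ι(y)] and ι([x, y]) = λ[ι(x), ι(y)] for all x, y ∈ C. -/

import Mathlib

universe u v

section Aux
variable {k : Type u} [Field k] {C : Type v} [LieRing C] [LieAlgebra k C]
variable (circ : C →ₗ[k] C →ₗ[k] C)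

/-- The sub-adjacent bracket of a post-Lie algebra. -/
private def sb (x y : C) : C := circ x y - circ y x + ⁅x, y⁆

/-- The semidirect-product bracket on `C̃ ⋉ C`. -/
private def br (μ : k) (x y : ULift.{u} (C × C)) : ULift.{u} (C × C) :=
  ⟨(sb circ x.down.1 y.down.1,
    circ x.down.1 y.down.2 - circ y.down.1 x.down.2 + μ • ⁅x.down.2, y.down.2⁆)⟩

private lemma br_lemmas (μ : k) (x y z : ULift.{u} (C × C)) (t : k) :
    br circ μ (x + y) z = br circ μ x z + br circ μ y z ∧
    br circ μ x (y + z) = br circ μ x y + br circ μ x z ∧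
    br circ μ x x = 0 ∧
    br circ μ x (t • y) = t • br circ μ x y := by
  refine ⟨?_, ?_, ?_, ?_⟩ <;>
    simp only [br, sb, ULift.ext_iff, ULift.add_down, ULift.smul_down, ULift.zero_down,
      Prod.ext_iff, Prod.fst_add, Prod.snd_add, Prod.smul_fst, Prod.smul_snd,
      Prod.fst_zero, Prod.snd_zero, map_add, map_sub, map_smul, LinearMap.add_apply,
      LinearMap.sub_apply, LinearMap.smul_apply, lie_add, add_lie, lie_smul, smul_lie,
      smul_add, smul_sub, smul_smul, lie_self] <;>
    (try constructor) <;> (first | trivial | module)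

private lemma comp1
    (h1 : ∀ x y z : C,
      circ (circ x y) z - circ x (circ y z) - circ (circ y x) z + circ y (circ x z)
        = circ ⁅y, x⁆ z)
    (h2 : ∀ x y z : C, circ x ⁅y, z⁆ = ⁅circ x y, z⁆ + ⁅y, circ x z⁆)
    (u v w : C) :
    sb circ u (sb circ v w) = sb circ (sb circ u v) w + sb circ v (sb circ u w) := by
  simp only [sb, map_add, map_sub, LinearMap.add_apply, LinearMap.sub_apply,
    lie_add, add_lie, lie_sub, sub_lie]
  linear_combination (norm := module) h2 u v w + h2 w u v - h2 v u w + h1 w v u + h1 v u w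
    - h1 w u v + leibniz_lie u v w - lie_skew v (circ w u)

private lemma comp2 (μ : k)
    (h1 : ∀ x y z : C,
      circ (circ x y) z - circ x (circ y z) - circ (circ y x) z + circ y (circ x z)
        = circ ⁅y, x⁆ z)
    (h2 : ∀ x y z : C, circ x ⁅y, z⁆ = ⁅circ x y, z⁆ + ⁅y, circ x z⁆)
    (u v w a b c : C) :
    circ u (circ v c - circ w b + μ • ⁅b, c⁆) - circ (sb circ v w) a
        + μ • ⁅a, circ v c - circ w b + μ • ⁅b, c⁆⁆
      = (circ (sb circ u v) c - circ w (circ u b - circ v a + μ • ⁅a, b⁆)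
            + μ • ⁅circ u b - circ v a + μ • ⁅a, b⁆, c⁆)
        + (circ v (circ u c - circ w a + μ • ⁅a, c⁆) - circ (sb circ u w) b
            + μ • ⁅b, circ u c - circ w a + μ • ⁅a, c⁆⁆) := by
  simp only [sb, map_add, map_sub, map_smul, LinearMap.add_apply, LinearMap.sub_apply,
    LinearMap.smul_apply, lie_add, add_lie, lie_sub, sub_lie, lie_smul, smul_lie,
    smul_add, smul_sub, smul_smul]
  linear_combination (norm := module) h1 w v a + h1 v u c - h1 w u b
    + μ • h2 u b c + μ • h2 w a b - μ • h2 v a c - μ • lie_skew b (circ w a)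
    + (μ * μ) • leibniz_lie a b c

@[reducible] private def lring (μ : k)
    (h1 : ∀ x y z : C,
      circ (circ x y) z - circ x (circ y z) - circ (circ y x) z + circ y (circ x z)
        = circ ⁅y, x⁆ z)
    (h2 : ∀ x y z : C, circ x ⁅y, z⁆ = ⁅circ x y, z⁆ + ⁅y, circ x z⁆) :
    LieRing (ULift.{u} (C × C)) :=
  { (inferInstance : AddCommGroup (ULift.{u} (C × C))) with
    bracket := br circ μ
    add_lie := fun x y z => (br_lemmas circ μ x y z 1).1
    lie_add := fun x y z => (br_lemmas circ μ x y z 1).2.1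
    lie_self := fun x => (br_lemmas circ μ x x x 1).2.2.1
    leibniz_lie := by
      intro x y z
      show br circ μ x (br circ μ y z) = br circ μ (br circ μ x y) z + br circ μ y (br circ μ x z)
      simp only [br, ULift.ext_iff, ULift.add_down, Prod.ext_iff, Prod.fst_add, Prod.snd_add]
      exact ⟨comp1 circ h1 h2 _ _ _, comp2 circ μ h1 h2 _ _ _ _ _ _⟩ }

@[reducible] private def lalg (μ : k)
    (h1 : ∀ x y z : C,
      circ (circ x y) z - circ x (circ y z) - circ (circ y x) z + circ y (circ x z)
        = circ ⁅y, x⁆ z)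
    (h2 : ∀ x y z : C, circ x ⁅y, z⁆ = ⁅circ x y, z⁆ + ⁅y, circ x z⁆) :
    @LieAlgebra k (ULift.{u} (C × C)) _ (lring circ μ h1 h2) :=
  letI := lring circ μ h1 h2
  { (inferInstance : Module k (ULift.{u} (C × C))) with
    lie_smul := fun t x y => (br_lemmas circ μ x y y t).2.2.2 }

end Aux

theorem stmt13 {k : Type u} [Field k] [CharZero k]
    {C : Type v} [LieRing C] [LieAlgebra k C] (lam : k) (hlam : lam ≠ 0)
    (circ : C →ₗ[k] C →ₗ[k] C)
    (hpost1 : ∀ x y z : C,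
      circ (circ x y) z - circ x (circ y z) - circ (circ y x) z + circ y (circ x z)
        = circ ⁅y, x⁆ z)
    (hpost2 : ∀ x y z : C, circ x ⁅y, z⁆ = ⁅circ x y, z⁆ + ⁅y, circ x z⁆) :
    ∃ (L : Type (max u v)) (_ : LieRing L) (_ : LieAlgebra k L)
      (P : L →ₗ[k] L) (ι : C →ₗ[k] L),
      (∀ x y : L, ⁅P x, P y⁆ = P (⁅P x, y⁆ + ⁅x, P y⁆ + lam • ⁅x, y⁆)) ∧
      Function.Injective ι ∧
      (∀ x y : C, ι (circ x y) = ⁅P (ι x), ι y⁆) ∧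
      (∀ x y : C, ι ⁅x, y⁆ = lam • ⁅ι x, ι y⁆) := by
  letI I1 : LieRing (ULift.{u} (C × C)) := lring circ lam⁻¹ hpost1 hpost2
  letI I2 : LieAlgebra k (ULift.{u} (C × C)) := lalg circ lam⁻¹ hpost1 hpost2
  have hbr : ∀ a b : ULift.{u} (C × C), ⁅a, b⁆ = br circ lam⁻¹ a b := fun _ _ => rfl
  refine ⟨ULift.{u} (C × C), I1, I2,
    { toFun := fun x => ⟨(x.down.2 - lam • x.down.1, 0)⟩
      map_add' := by
        intro x y
        simp only [ULift.ext_iff, ULift.add_down, Prod.ext_iff, Prod.fst_add, Prod.snd_add,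
          smul_add]
        constructor <;> abel
      map_smul' := by
        intro t x
        simp only [ULift.ext_iff, ULift.smul_down, Prod.ext_iff, Prod.smul_fst, Prod.smul_snd,
          RingHom.id_apply, smul_sub, smul_smul, mul_comm, smul_zero]
        constructor <;> first | trivial | rfl },
    { toFun := fun x => ⟨(0, x)⟩
      map_add' := by
        intro x y
        simp only [ULift.ext_iff, ULift.add_down, Prod.ext_iff, Prod.fst_add, Prod.snd_add,
          add_zero]
        constructor <;> first | trivial | rfl
      map_smul' := by
        intro t x
        simp only [ULift.ext_iff, ULift.smul_down, Prod.ext_iff, Prod.smul_fst, Prod.smul_snd,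
          RingHom.id_apply, smul_zero]
        constructor <;> first | trivial | rfl }, ?_, ?_, ?_, ?_⟩
  · -- Rota-Baxter identity
    intro x y
    simp only [hbr, LinearMap.coe_mk, AddHom.coe_mk]
    simp only [br, sb, ULift.ext_iff, ULift.add_down, ULift.smul_down, Prod.ext_iff,
      Prod.fst_add, Prod.snd_add, Prod.smul_fst, Prod.smul_snd, map_add, map_sub, map_smul,
      map_zero, LinearMap.add_apply, LinearMap.sub_apply, LinearMap.smul_apply,
      LinearMap.zero_apply, lie_add, add_lie, lie_sub, sub_lie, lie_smul, smul_lie, lie_zero,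
      zero_lie, smul_add, smul_sub, smul_zero, smul_smul, mul_inv_cancel₀ hlam,
      inv_mul_cancel₀ hlam, one_smul]
    try constructor
    all_goals first | trivial | rfl | module
  · -- injectivity
    intro x y h
    exact ((by simpa only [LinearMap.coe_mk, AddHom.coe_mk, ULift.ext_iff, Prod.ext_iff] using h : True ∧ x = y)).2
  · -- ι (circ x y) = ⁅P (ι x), ι y⁆
    intro x y
    simp only [hbr]
    simp only [br, sb, LinearMap.coe_mk, AddHom.coe_mk, ULift.ext_iff, Prod.ext_iff,
      map_zero, map_sub, map_smul, LinearMap.zero_apply, LinearMap.sub_apply, smul_zero,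
      lie_zero, zero_lie, sub_zero, zero_sub, add_zero, zero_add, neg_zero, smul_smul]
    try constructor
    all_goals first | trivial | rfl | module
  · -- ι ⁅x, y⁆ = lam • ⁅ι x, ι y⁆
    intro x y
    simp only [hbr]
    simp only [br, sb, LinearMap.coe_mk, AddHom.coe_mk, ULift.ext_iff, ULift.smul_down,
      Prod.ext_iff, Prod.smul_fst, Prod.smul_snd, map_zero, LinearMap.zero_apply,
      lie_zero, zero_lie, sub_zero, zero_sub, add_zero, zero_add, neg_zero, smul_zero,
      smul_smul, mul_inv_cancel₀ hlam, one_smul, sub_self]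
    try constructor
    all_goals first | trivial | rfl | module
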